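/- Let R be a proper nonempty subset of [n], let T be a spanning tree of Q_n that reduces over R, and let e = {Y, Y ⊕ {j}} be an edge of T in a direction j ∉ R; set X = Y ∩ R, so that e is an edge of the spanning tree T(R,X) of Q_n(R,X). Then: (a) e is not i-slidable in T for any i ∈ R; and (b) for any i ∉ R with i ≠ j, e is i-slidable in T if and only if e is i-slidable as an edge of the spanning tree T(R,X) of the cube Q_n(R,X). -/

import Mathlib

open SimpleGraph

/-- The `n`-cube: vertices are the subsets of `[n]` (modelled as `Finset (Fin n)`),
with an edge between `X` and `Y` iff their symmetric difference is a singleton. -/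
def cube (n : ℕ) : SimpleGraph (Finset (Fin n)) where
  Adj X Y := (symmDiff X Y).card = 1
  symm := by
    constructor
    intro X Y h
    rwa [symmDiff_comm]
  loopless := by
    constructor
    intro X h
    simp [symmDiff_self, Finset.bot_eq_empty] at h

/-- `T` is a spanning tree of `G` (both graphs on the same vertex set). -/
def IsSpanningTreeOf {V : Type*} (T G : SimpleGraph V) : Prop :=
  T ≤ G ∧ T.IsTree

/-- The edge `e` of the `n`-cube is in direction `i`. -/
def edgeInDir {n : ℕ} (i : Fin n) (e : Sym2 (Finset (Fin n))) : Prop :=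
  ∃ X : Finset (Fin n), e = s(X, symmDiff X {i})

/-- The number of edges of `T` in direction `i`. -/
noncomputable def dirCount {n : ℕ} (T : SimpleGraph (Finset (Fin n))) (i : Fin n) : ℕ :=
  {e | e ∈ T.edgeSet ∧ edgeInDir i e}.ncard

/-- `a` is the signature of the tree `T`. -/
def HasSig {n : ℕ} (T : SimpleGraph (Finset (Fin n))) (a : Fin n → ℕ) : Prop :=
  ∀ i, dirCount T i = a i

/-- `a` is a signature of `Q_n`, i.e. the signature of some spanning tree of the `n`-cube. -/
def IsSignature (n : ℕ) (a : Fin n → ℕ) : Prop :=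
  ∃ T, IsSpanningTreeOf T (cube n) ∧ HasSig T a

/-- A section of the set of nonempty subsets of `[n]`. -/
def IsSection {n : ℕ} (ψ : Finset (Fin n) → Fin n) : Prop :=
  ∀ X : Finset (Fin n), X.Nonempty → ψ X ∈ X

/-- The number of nonempty subsets on which the section `ψ` takes the value `i`. -/
noncomputable def secCount {n : ℕ} (ψ : Finset (Fin n) → Fin n) (i : Fin n) : ℕ :=
  {X : Finset (Fin n) | X.Nonempty ∧ ψ X = i}.ncard

/-- The tuple `a` reduces over `R` : `Σ_{i ∈ R} a i = 2^|R| - 1`. -/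
def ReducesOver {n : ℕ} (a : Fin n → ℕ) (R : Finset (Fin n)) : Prop :=
  ∑ i ∈ R, a i = 2 ^ R.card - 1

/-- `a` is reducible: it reduces over some proper nonempty subset of `[n]`. -/
def IsReducibleSig {n : ℕ} (a : Fin n → ℕ) : Prop :=
  ∃ R : Finset (Fin n), R.Nonempty ∧ R ≠ Finset.univ ∧ ReducesOver a R

/-- `a` is irreducible. -/
def IsIrreducibleSig {n : ℕ} (a : Fin n → ℕ) : Prop := ¬ IsReducibleSig a

/-- `T` is upright: every vertex `X` is at distance `|X|` in `T` from the root `∅`. -/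
def IsUpright {n : ℕ} (T : SimpleGraph (Finset (Fin n))) : Prop :=
  ∀ X : Finset (Fin n), T.dist X ∅ = X.card

/-- `ψ` is the section associated to the upright tree `T`: for each nonempty `X`,
`ψ X ∈ X` and `X - {ψ X}` is the next vertex after `X` on the path in `T` from `X` to `∅`. -/
def IsTreeSection {n : ℕ} (T : SimpleGraph (Finset (Fin n))) (ψ : Finset (Fin n) → Fin n) : Prop :=
  ∀ X : Finset (Fin n), X.Nonempty → ψ X ∈ X ∧ T.Adj X (X.erase (ψ X))

/-- The minimum of `Σ_{i ∈ K} a i` over the sets `K` of `k` directions. -/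
noncomputable def minSum {n : ℕ} (a : Fin n → ℕ) (k : ℕ) : ℕ :=
  sInf {m : ℕ | ∃ K : Finset (Fin n), K.card = k ∧ ∑ i ∈ K, a i = m}

/-- The excess of `a` at `k`. -/
noncomputable def excess {n : ℕ} (a : Fin n → ℕ) (k : ℕ) : ℤ :=
  (minSum a k : ℤ) - (2 ^ k - 1)

/-- The result of sliding the edge `e` in direction `i`. -/
def slideEdge {n : ℕ} (i : Fin n) (e : Sym2 (Finset (Fin n))) : Sym2 (Finset (Fin n)) :=
  Sym2.map (fun X => symmDiff X {i}) e

/-- The edge `e` of the spanning tree `T` of `Q_n` is `i`-slidable. -/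
def Slidable (n : ℕ) (T : SimpleGraph (Finset (Fin n))) (i : Fin n)
    (e : Sym2 (Finset (Fin n))) : Prop :=
  e ∈ T.edgeSet ∧
    IsSpanningTreeOf (SimpleGraph.fromEdgeSet ((T.edgeSet \ {e}) ∪ {slideEdge i e})) (cube n)

/-- The edge set `E` is (the edge set of) a spanning tree of the subgraph of the
`n`-cube induced on the vertex set `s`. -/
def IsSpanningTreeOn (n : ℕ) (s : Set (Finset (Fin n))) (E : Set (Sym2 (Finset (Fin n)))) : Prop :=
  E ⊆ (cube n).edgeSet ∧ (∀ e ∈ E, ∀ v ∈ e, v ∈ s) ∧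
    ((SimpleGraph.fromEdgeSet E).induce s).IsTree

/-- The edges of `T` with both endpoints in `s`. -/
def edgesWithin {n : ℕ} (s : Set (Finset (Fin n))) (T : SimpleGraph (Finset (Fin n))) :
    Set (Sym2 (Finset (Fin n))) :=
  {e | e ∈ T.edgeSet ∧ ∀ v ∈ e, v ∈ s}

/-- The edge `e` of the tree with edge set `E`, spanning the subgraph of the `n`-cube
induced on `s`, is `i`-slidable. -/
def SlidableOn (n : ℕ) (s : Set (Finset (Fin n))) (E : Set (Sym2 (Finset (Fin n))))
    (i : Fin n) (e : Sym2 (Finset (Fin n))) : Prop :=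
  e ∈ E ∧ IsSpanningTreeOn n s ((E \ {e}) ∪ {slideEdge i e})

/-- The number of edges of `T` in direction `i` with both endpoints in `s`. -/
noncomputable def dirCountOn {n : ℕ} (s : Set (Finset (Fin n)))
    (T : SimpleGraph (Finset (Fin n))) (i : Fin n) : ℕ :=
  {e | e ∈ T.edgeSet ∧ edgeInDir i e ∧ ∀ v ∈ e, v ∈ s}.ncard

/-- `T'` is a spanning tree of the `n`-cube obtained from the spanning tree `T` by a
single edge slide. -/
def SlideStep (n : ℕ) (T T' : SimpleGraph (Finset (Fin n))) : Prop :=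
  IsSpanningTreeOf T (cube n) ∧ IsSpanningTreeOf T' (cube n) ∧
    ∃ (i : Fin n) (e : Sym2 (Finset (Fin n))), e ∈ T.edgeSet ∧
      T' = SimpleGraph.fromEdgeSet ((T.edgeSet \ {e}) ∪ {slideEdge i e})

/-- The trees `T` and `T'` are related by a single edge slide. -/
def SlideAdj (n : ℕ) (T T' : SimpleGraph (Finset (Fin n))) : Prop :=
  T ≠ T' ∧ ∃ (i : Fin n) (e : Sym2 (Finset (Fin n))),
    (e ∈ T.edgeSet ∧ T' = SimpleGraph.fromEdgeSet ((T.edgeSet \ {e}) ∪ {slideEdge i e})) ∨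
    (e ∈ T'.edgeSet ∧ T = SimpleGraph.fromEdgeSet ((T'.edgeSet \ {e}) ∪ {slideEdge i e}))

/-- The spanning trees of the `n`-cube. -/
def SpanningTrees (n : ℕ) := {T : SimpleGraph (Finset (Fin n)) // IsSpanningTreeOf T (cube n)}

/-- The edge slide graph `E(n)` of the `n`-cube. -/
def eslide (n : ℕ) : SimpleGraph (SpanningTrees n) where
  Adj T T' := SlideAdj n T.1 T'.1
  symm := by
    constructor
    rintro T T' ⟨hne, i, e, h⟩
    exact ⟨hne.symm, i, e, h.symm⟩
  loopless := by
    constructor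
    rintro T ⟨hne, -⟩
    exact hne rfl

/-- The projection `π_R(T)` of `T` to `Q_R`: a graph on the subsets of `R`, with `A`
adjacent to `B` iff some edge of `T` projects to `{A, B}`. -/
def projTree (n : ℕ) (R : Finset (Fin n)) (T : SimpleGraph (Finset (Fin n))) :
    SimpleGraph ↥{W : Finset (Fin n) | W ⊆ R} where
  Adj A B := A.1 ≠ B.1 ∧ ∃ U V : Finset (Fin n), T.Adj U V ∧ U ∩ R = A.1 ∧ V ∩ R = B.1
  symm := by
    constructor
    rintro A B ⟨hne, U, V, hUV, hU, hV⟩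
    exact ⟨hne.symm, V, U, hUV.symm, hV, hU⟩
  loopless := by
    constructor
    rintro A ⟨hne, -⟩
    exact hne rfl

/-- The projected edge set `π_R(T)`: images under `π_R` of the edges of `T` in
directions belonging to `R`. -/
def projEdges {n : ℕ} (R : Finset (Fin n)) (T : SimpleGraph (Finset (Fin n))) :
    Set (Sym2 (Finset (Fin n))) :=
  {f | ∃ e ∈ T.edgeSet, (∃ i ∈ R, edgeInDir i e) ∧ f = Sym2.map (· ∩ R) e}

/-- The decomposition `T ↦ (F_T, (T(R,X))_{X ⊆ R})` of a tree reducing over `R`. -/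
def decompose (n : ℕ) (R : Finset (Fin n)) (T : SimpleGraph (Finset (Fin n))) :
    Set (Sym2 (Finset (Fin n))) ×
      ((X : Finset (Fin n)) → X ⊆ R → SimpleGraph ↥{W : Finset (Fin n) | W ∩ R = X}) :=
  ⟨{e | e ∈ T.edgeSet ∧ ∃ i ∈ R, edgeInDir i e},
   fun X _ => T.induce {W : Finset (Fin n) | W ∩ R = X}⟩

/-- `s` is the least index such that `ε_k(a) = 0` for all `s ≤ k ≤ n`; i.e. the
entries of (an ordered) `a` with index `≤ s` form the unsaturated part of `a`. -/
def UnsatIndex (n : ℕ) (a : Fin n → ℕ) (s : ℕ) : Prop :=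
  (∀ k, s ≤ k → k ≤ n → excess a k = 0) ∧
    ∀ s' < s, ¬ (∀ k, s' ≤ k → k ≤ n → excess a k = 0)

/-- The restriction of `a` to its first `s` entries is reducible (as a tuple of length `s`). -/
def ReducibleBelow {n : ℕ} (a : Fin n → ℕ) (s : ℕ) : Prop :=
  ∃ R : Finset (Fin n), R.Nonempty ∧ (∀ i ∈ R, (i : ℕ) < s) ∧ R.card < s ∧
    ∑ i ∈ R, a i = 2 ^ R.card - 1

/-- `a` is strictly reducible: it is reducible and its unsaturated part is reducible. -/
def StrictlyReducible (n : ℕ) (a : Fin n → ℕ) : Prop :=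
  IsReducibleSig a ∧
    ∃ (σ : Equiv.Perm (Fin n)) (s : ℕ), Monotone (a ∘ σ) ∧
      UnsatIndex n (a ∘ σ) s ∧ ReducibleBelow (a ∘ σ) s

set_option linter.unusedSectionVars false
set_option linter.unusedVariables false

section Foundation

variable {V : Type*} [Fintype V]

private lemma aux_conn_delete {G : SimpleGraph V} {v w : V} (hG : G.Connected)
    (hr : (G \ SimpleGraph.fromEdgeSet {s(v,w)}).Reachable v w) :
    (G \ SimpleGraph.fromEdgeSet {s(v,w)}).Connected := by
  rw [connected_iff] at hG ⊢
  refine ⟨?_, hG.2⟩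
  intro a b
  obtain ⟨p⟩ := hG.1 a b
  induction p with
  | nil => exact Reachable.refl _
  | @cons x y z h q ih =>
    refine Reachable.trans ?_ ih
    by_cases he : s(x, y) = s(v, w)
    · rw [Sym2.eq_iff] at he
      rcases he with ⟨rfl, rfl⟩ | ⟨rfl, rfl⟩
      · exact hr
      · exact hr.symm
    · refine Adj.reachable ?_
      rw [sdiff_adj, fromEdgeSet_adj]
      exact ⟨h, fun hc => he hc.1⟩

private lemma aux_exists_tree_le (G : SimpleGraph V) (hG : G.Connected) :
    ∃ T ≤ G, T.IsTree := by
  classical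
  generalize hn : G.edgeSet.ncard = n
  induction n using Nat.strong_induction_on generalizing G with
  | _ n ih =>
  by_cases hA : G.IsAcyclic
  · exact ⟨G, le_rfl, hG, hA⟩
  rw [IsAcyclic] at hA; push_neg at hA
  obtain ⟨v, c, hc⟩ := hA
  have hne : c.edges ≠ [] := by
    cases c with
    | nil => exact absurd hc (by simp [Walk.isCycle_def])
    | cons h p => simp
  obtain ⟨e, he⟩ : ∃ e, e ∈ c.edges := List.exists_mem_of_ne_nil _ hne
  induction e using Sym2.ind with | _ a b =>
  have hab : G.Adj a b := c.adj_of_mem_edges he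
  have hreach : (G \ SimpleGraph.fromEdgeSet {s(a,b)}).Reachable a b :=
    (adj_and_reachable_delete_edges_iff_exists_cycle.2 ⟨v, c, hc, he⟩).2
  have hconn' := aux_conn_delete hG hreach
  have hsub : (G \ SimpleGraph.fromEdgeSet {s(a,b)}).edgeSet = G.edgeSet \ {s(a,b)} := by
    rw [edgeSet_sdiff, edgeSet_fromEdgeSet, edgeSet_sdiff_sdiff_isDiag]
  have hlt : (G \ SimpleGraph.fromEdgeSet {s(a,b)}).edgeSet.ncard < n := by
    rw [hsub, ← hn]
    exact Set.ncard_diff_singleton_lt_of_mem ((G.mem_edgeSet).mpr hab) (Set.toFinite _)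
  obtain ⟨T, hTle, hT⟩ := ih _ hlt _ hconn' rfl
  exact ⟨T, hTle.trans sdiff_le, hT⟩

private lemma aux_exists_tree_ge (G : SimpleGraph V) [Nonempty V] (hA : G.IsAcyclic) :
    ∃ T, G ≤ T ∧ T.IsTree := by
  classical
  generalize hn : Fintype.card (Sym2 V) - G.edgeSet.ncard = n
  induction n using Nat.strong_induction_on generalizing G with
  | _ n ih =>
  by_cases hC : G.Connected
  · exact ⟨G, le_rfl, hC, hA⟩
  have hpc : ¬ G.Preconnected := fun h => hC ⟨h⟩
  rw [Preconnected] at hpc; push_neg at hpc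
  obtain ⟨u, v, huv⟩ := hpc
  have hne : u ≠ v := by rintro rfl; exact huv (Reachable.refl _)
  have hnadj : ¬ G.Adj u v := fun h => huv h.reachable
  set G' := G ⊔ SimpleGraph.edge u v with hG'
  have hle : G ≤ G' := le_sup_left
  have hA' : G'.IsAcyclic := by
    intro w c hc
    by_cases hmem : s(u,v) ∈ c.edges
    · have hr := (adj_and_reachable_delete_edges_iff_exists_cycle.2 ⟨w, c, hc, hmem⟩).2
      apply huv
      refine hr.mono ?_
      intro a b hab
      change (G' \ SimpleGraph.fromEdgeSet {s(u,v)}).Adj a b at hab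
      rw [sdiff_adj, fromEdgeSet_adj] at hab
      rcases hab with ⟨hab, hnotin⟩
      rw [hG', sup_adj, edge_adj] at hab
      rcases hab with h | h
      · exact h
      · exfalso; apply hnotin
        refine ⟨?_, h.2⟩
        rcases h.1 with ⟨rfl,rfl⟩|⟨rfl,rfl⟩
        · rfl
        · exact Sym2.eq_swap
    · have hedges : ∀ e ∈ c.edges, e ∈ G.edgeSet := by
        intro e he'
        have hmem' := c.edges_subset_edgeSet he'
        rw [hG', edgeSet_sup, edge_edgeSet_of_ne hne] at hmem'
        rcases hmem' with h | h
        · exact h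
        · exact absurd (h ▸ he') hmem
      exact hA (c.transfer G hedges) (hc.transfer hedges)
  have hcard : G'.edgeSet.ncard = G.edgeSet.ncard + 1 := by
    rw [hG', edgeSet_sup, edge_edgeSet_of_ne hne, Set.union_singleton,
      Set.ncard_insert_of_notMem (fun h => hnadj ((G.mem_edgeSet).mp h)) (Set.toFinite _)]
  have hlt2 : G.edgeSet.ncard < Fintype.card (Sym2 V) := by
    have h1 : G.edgeSet ⊂ Set.univ := by
      refine Set.ssubset_univ_iff.2 ?_
      intro h
      exact hnadj ((G.mem_edgeSet).mp (by rw [h]; trivial))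
    have := Set.ncard_lt_ncard h1 (Set.toFinite _)
    rwa [Set.ncard_univ, Nat.card_eq_fintype_card] at this
  have hmeas : Fintype.card (Sym2 V) - G'.edgeSet.ncard < n := by omega
  obtain ⟨T, hT1, hT2⟩ := ih _ hmeas G' hA' rfl
  exact ⟨T, hle.trans hT1, hT2⟩

private lemma aux_tree_ncard {G : SimpleGraph V} (hG : G.IsTree) :
    G.edgeSet.ncard + 1 = Fintype.card V := by
  classical
  have h := hG.card_edgeFinset
  rwa [Set.ncard_eq_toFinset_card' G.edgeSet]

private lemma aux_acyclic_ncard_le (G : SimpleGraph V) [Nonempty V] (hA : G.IsAcyclic) :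
    G.edgeSet.ncard + 1 ≤ Fintype.card V := by
  obtain ⟨T, hle, hT⟩ := aux_exists_tree_ge G hA
  have := Set.ncard_le_ncard (edgeSet_mono hle) (Set.toFinite _)
  have := aux_tree_ncard hT
  omega

private lemma aux_isTree_of_connected_ncard {G : SimpleGraph V} (hC : G.Connected)
    (h : G.edgeSet.ncard + 1 = Fintype.card V) : G.IsTree := by
  obtain ⟨T, hle, hT⟩ := aux_exists_tree_le G hC
  have h1 := aux_tree_ncard hT
  have h2 : T.edgeSet = G.edgeSet :=
    Set.eq_of_subset_of_ncard_le (edgeSet_mono hle) (by omega) (Set.toFinite _)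
  rw [← edgeSet_inj.1 h2]
  exact hT

private lemma aux_isTree_of_acyclic_ncard {G : SimpleGraph V} [Nonempty V] (hA : G.IsAcyclic)
    (h : G.edgeSet.ncard + 1 = Fintype.card V) : G.IsTree := by
  obtain ⟨T, hle, hT⟩ := aux_exists_tree_ge G hA
  have h1 := aux_tree_ncard hT
  have h2 : G.edgeSet = T.edgeSet :=
    Set.eq_of_subset_of_ncard_le (edgeSet_mono hle) (by omega) (Set.toFinite _)
  rw [edgeSet_inj.1 h2]
  exact hT

private lemma aux_reachable_of_adj_imp {W : Type*} {G H : SimpleGraph W}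
    (h : ∀ u v, G.Adj u v → H.Reachable u v) {a b : W} (hr : G.Reachable a b) :
    H.Reachable a b := by
  obtain ⟨p⟩ := hr
  induction p with
  | nil => exact Reachable.refl _
  | cons hadj q ih => exact (h _ _ hadj).trans ih

end Foundation


-- ===== cube basics =====
section CubeBasics

variable {n : ℕ}

/-- symmetric difference of the two endpoints of an unordered pair -/
def sd {n : ℕ} : Sym2 (Finset (Fin n)) → Finset (Fin n) :=
  Sym2.lift ⟨fun U V => symmDiff U V, fun U V => symmDiff_comm U V⟩

@[simp] lemma sd_mk {U V : Finset (Fin n)} : sd s(U,V) = symmDiff U V := rfl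

lemma edgeInDir_iff {i : Fin n} {e : Sym2 (Finset (Fin n))} :
    edgeInDir i e ↔ sd e = {i} := by
  induction e using Sym2.ind with | _ U V =>
  constructor
  · rintro ⟨X, hX⟩
    rw [Sym2.eq_iff] at hX
    rcases hX with ⟨rfl, rfl⟩ | ⟨rfl, rfl⟩
    · rw [sd_mk, symmDiff_symmDiff_cancel_left]
    · rw [sd_mk, symmDiff_comm, symmDiff_symmDiff_cancel_left]
  · intro h
    rw [sd_mk] at h
    refine ⟨U, ?_⟩
    rw [show symmDiff U {i} = V by rw [← h, symmDiff_symmDiff_cancel_left]]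

lemma cube_mem_edgeSet {e : Sym2 (Finset (Fin n))} :
    e ∈ (cube n).edgeSet ↔ (sd e).card = 1 := by
  induction e using Sym2.ind with | _ U V => exact Iff.rfl

lemma sd_slideEdge (i : Fin n) (e : Sym2 (Finset (Fin n))) : sd (slideEdge i e) = sd e := by
  induction e using Sym2.ind with | _ U V =>
  rw [slideEdge, Sym2.map_pair_eq, sd_mk, sd_mk]
  ext x
  simp only [Finset.mem_symmDiff, Finset.mem_singleton]
  tauto

lemma inter_sd (U V R : Finset (Fin n)) :
    symmDiff U V ∩ R = symmDiff (U ∩ R) (V ∩ R) := by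
  ext x
  simp only [Finset.mem_symmDiff, Finset.mem_inter]
  tauto

lemma ne_of_sd {U V : Finset (Fin n)} {d : Fin n} (h : symmDiff U V = {d}) : U ≠ V := by
  intro hUV
  rw [hUV, symmDiff_self] at h
  exact (Finset.singleton_ne_empty d) h.symm

lemma sdx_ne (Y : Finset (Fin n)) (i : Fin n) : symmDiff Y {i} ≠ Y := by
  intro h
  have := symmDiff_eq_left.mp h
  exact Finset.singleton_ne_empty i this

lemma sdx_inj {Y : Finset (Fin n)} {i j : Fin n} (h : symmDiff Y {i} = symmDiff Y {j}) :
    i = j := by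
  have : ({i} : Finset (Fin n)) = {j} := by
    rw [← symmDiff_symmDiff_cancel_left Y {i}, h, symmDiff_symmDiff_cancel_left]
  exact Finset.singleton_injective this

end CubeBasics

-- ===== counting helpers =====

lemma aux_ncard_fiber {α β : Type*} [Finite α] [DecidableEq β] (s : Set α) (f : α → β)
    (B : Finset β) (h : ∀ x ∈ s, f x ∈ B) :
    s.ncard = ∑ b ∈ B, {x ∈ s | f x = b}.ncard := by
  classical
  have hs : s.Finite := Set.toFinite _
  rw [Set.ncard_eq_toFinset_card s hs]
  rw [Finset.card_eq_sum_card_fiberwise (f := f) (t := B)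
    (fun x hx => h x (hs.mem_toFinset.mp hx))]
  refine Finset.sum_congr rfl fun b _ => ?_
  rw [← Set.ncard_coe_finset]
  congr 1
  ext x
  simp only [Finset.coe_filter, Set.mem_setOf_eq, Set.Finite.mem_toFinset hs]

section DirCount

variable {n : ℕ}

lemma dirCount_eq (T : SimpleGraph (Finset (Fin n))) (i : Fin n) :
    dirCount T i = {e | e ∈ T.edgeSet ∧ sd e = {i}}.ncard := by
  unfold dirCount
  congr 1
  ext e
  exact and_congr_right fun _ => edgeInDir_iff

lemma sum_dirCount_total {T : SimpleGraph (Finset (Fin n))} (hT : T ≤ cube n) :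
    ∑ i : Fin n, dirCount T i = T.edgeSet.ncard := by
  classical
  have hmem : ∀ e ∈ T.edgeSet, sd e ∈
      Finset.univ.image (fun i : Fin n => ({i} : Finset (Fin n))) := by
    intro e he
    have := cube_mem_edgeSet.mp (edgeSet_mono hT he)
    obtain ⟨d, hd⟩ := Finset.card_eq_one.mp this
    rw [hd]
    exact Finset.mem_image_of_mem _ (Finset.mem_univ d)
  rw [aux_ncard_fiber T.edgeSet sd _ hmem,
    Finset.sum_image (fun i _ j _ h => Finset.singleton_injective h)]
  exact Finset.sum_congr rfl fun i _ => dirCount_eq T i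

lemma sum_dirCount_R {T : SimpleGraph (Finset (Fin n))} (hT : T ≤ cube n) (R : Finset (Fin n)) :
    ∑ i ∈ R, dirCount T i = {e | e ∈ T.edgeSet ∧ ∃ i ∈ R, sd e = {i}}.ncard := by
  classical
  set cross := {e | e ∈ T.edgeSet ∧ ∃ i ∈ R, sd e = {i}} with hcross
  have hmem : ∀ e ∈ cross, sd e ∈ R.image (fun i : Fin n => ({i} : Finset (Fin n))) := by
    rintro e ⟨-, i, hiR, hi⟩
    rw [hi]
    exact Finset.mem_image_of_mem _ hiR
  rw [aux_ncard_fiber cross sd _ hmem,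
    Finset.sum_image (fun i _ j _ h => Finset.singleton_injective h)]
  refine (Finset.sum_congr rfl fun i hi => ?_).symm
  rw [dirCount_eq]
  congr 1
  ext e
  constructor
  · rintro ⟨⟨he, -⟩, hsd⟩
    exact ⟨he, hsd⟩
  · rintro ⟨he, hsd⟩
    exact ⟨⟨he, i, hi, hsd⟩, hsd⟩

end DirCount

-- ===== classes and decomposition =====

lemma card_class {n : ℕ} (R X : Finset (Fin n)) (hX : X ⊆ R) :
    Nat.card {W : Finset (Fin n) | W ∩ R = X} = 2 ^ (n - R.card) := by
  classical
  rw [Nat.card_coe_set_eq]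
  have hset : {W : Finset (Fin n) | W ∩ R = X} =
      ↑(Finset.univ.filter (fun W : Finset (Fin n) => W ∩ R = X)) := by
    ext W; simp
  rw [hset, Set.ncard_coe_finset]
  have hcardp : (Rᶜ : Finset (Fin n)).powerset.card = 2 ^ (n - R.card) := by
    rw [Finset.card_powerset, Finset.card_compl, Fintype.card_fin]
  rw [← hcardp]
  apply Finset.card_bij (fun W _ => W \ R)
  · intro W hW
    rw [Finset.mem_powerset]
    intro a ha
    rw [Finset.mem_compl]
    exact (Finset.mem_sdiff.mp ha).2
  · intro W1 h1 W2 h2 h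
    rw [Finset.mem_filter] at h1 h2
    ext a
    by_cases ha : a ∈ R
    · constructor
      · intro haW
        have h' : a ∈ W1 ∩ R := Finset.mem_inter.mpr ⟨haW, ha⟩
        rw [h1.2, ← h2.2] at h'
        exact (Finset.mem_inter.mp h').1
      · intro haW
        have h' : a ∈ W2 ∩ R := Finset.mem_inter.mpr ⟨haW, ha⟩
        rw [h2.2, ← h1.2] at h'
        exact (Finset.mem_inter.mp h').1
    · constructor
      · intro haW
        have h' : a ∈ W1 \ R := Finset.mem_sdiff.mpr ⟨haW, ha⟩
        rw [h] at h'
        exact (Finset.mem_sdiff.mp h').1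
      · intro haW
        have h' : a ∈ W2 \ R := Finset.mem_sdiff.mpr ⟨haW, ha⟩
        rw [← h] at h'
        exact (Finset.mem_sdiff.mp h').1
  · intro Vv hV
    rw [Finset.mem_powerset] at hV
    refine ⟨Vv ∪ X, ?_, ?_⟩
    · rw [Finset.mem_filter]
      refine ⟨Finset.mem_univ _, ?_⟩
      ext a
      simp only [Finset.mem_inter, Finset.mem_union]
      constructor
      · rintro ⟨h1 | h1, h2⟩
        · exact absurd h2 (Finset.mem_compl.mp (hV h1))
        · exact h1
      · intro h
        exact ⟨Or.inr h, hX h⟩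
    · ext a
      simp only [Finset.mem_sdiff, Finset.mem_union]
      constructor
      · rintro ⟨h1 | h1, h2⟩
        · exact h1
        · exact absurd (hX h1) h2
      · intro h
        exact ⟨Or.inl h, Finset.mem_compl.mp (hV h)⟩

lemma induce_acyclic {V : Type*} {G : SimpleGraph V} (h : G.IsAcyclic) (s : Set V) :
    (G.induce s).IsAcyclic := by
  intro v c hc
  exact h (c.map (SimpleGraph.Embedding.induce s : G.induce s ↪g G).toHom)
    (hc.map (SimpleGraph.Embedding.induce s : G.induce s ↪g G).injective)

lemma edgesWithin_eq_image {n : ℕ} (s : Set (Finset (Fin n))) (T : SimpleGraph (Finset (Fin n))) :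
    edgesWithin s T = Sym2.map (Subtype.val : s → Finset (Fin n)) '' (T.induce s).edgeSet := by
  ext e
  constructor
  · intro hmem
    induction e using Sym2.ind with | _ U V =>
    obtain ⟨he, hv⟩ := hmem
    have hU : U ∈ s := hv U (Sym2.mem_mk_left U V)
    have hV : V ∈ s := hv V (Sym2.mem_mk_right U V)
    refine ⟨s(⟨U, hU⟩, ⟨V, hV⟩), ?_, Sym2.map_pair_eq _ _ _⟩
    exact (SimpleGraph.mem_edgeSet _).mpr ((SimpleGraph.mem_edgeSet _).mp he)
  · rintro ⟨e', he', rfl⟩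
    induction e' using Sym2.ind with | _ a b =>
    rw [Sym2.map_pair_eq]
    have hadj : T.Adj a.1 b.1 := (SimpleGraph.mem_edgeSet _).mp he'
    refine ⟨(SimpleGraph.mem_edgeSet _).mpr hadj, ?_⟩
    intro v hv
    rcases Sym2.mem_iff.mp hv with rfl | rfl
    · exact a.2
    · exact b.2

lemma ncard_edgesWithin {n : ℕ} (s : Set (Finset (Fin n))) (T : SimpleGraph (Finset (Fin n))) :
    (edgesWithin s T).ncard = (T.induce s).edgeSet.ncard := by
  rw [edgesWithin_eq_image,
    Set.ncard_image_of_injective _ (Sym2.map.injective Subtype.val_injective)]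

lemma decomp {n : ℕ} {T : SimpleGraph (Finset (Fin n))} (hT : IsSpanningTreeOf T (cube n))
    (R : Finset (Fin n)) (hred : ∑ i ∈ R, dirCount T i = 2 ^ R.card - 1)
    (X : Finset (Fin n)) (hX : X ⊆ R) :
    (T.induce {W : Finset (Fin n) | W ∩ R = X}).IsTree ∧
      (edgesWithin {W : Finset (Fin n) | W ∩ R = X} T).ncard = 2 ^ (n - R.card) - 1 := by
  classical
  obtain ⟨hle, htree⟩ := hT
  set r := R.card with hrdef
  have hr : r ≤ n := by
    have h' : R.card ≤ n := by simpa using Finset.card_le_univ R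
    rw [hrdef]; exact h'
  have h2r : 1 ≤ 2 ^ r := Nat.one_le_two_pow
  have h2n : 2 ^ r * 2 ^ (n - r) = 2 ^ n := by rw [← pow_add, Nat.add_sub_cancel' hr]
  have h2nr : 1 ≤ 2 ^ (n - r) := Nat.one_le_two_pow
  have htotal : T.edgeSet.ncard = 2 ^ n - 1 := by
    have h1 := aux_tree_ncard htree
    rw [Fintype.card_finset, Fintype.card_fin] at h1
    omega
  have hcross : {e | e ∈ T.edgeSet ∧ ∃ i ∈ R, sd e = {i}}.ncard = 2 ^ r - 1 := by
    rw [← sum_dirCount_R hle R]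
    exact hred
  set cross := {e | e ∈ T.edgeSet ∧ ∃ i ∈ R, sd e = {i}} with hcrossdef
  set within := T.edgeSet \ cross with hwdef
  have hwcard : within.ncard = 2 ^ n - 2 ^ r := by
    rw [hwdef, Set.ncard_diff (fun e he => he.1) (Set.toFinite _)]
    omega
  have hiiR : ∀ U V : Finset (Fin n), U ∩ V ∩ R = (U ∩ R) ∩ (V ∩ R) := by
    intro U V
    ext a
    simp only [Finset.mem_inter]
    tauto
  have hkey : ∀ (U V : Finset (Fin n)), T.Adj U V →
      ((¬ ∃ i ∈ R, symmDiff U V = {i}) ↔ U ∩ R = V ∩ R) := by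
    intro U V hUV
    obtain ⟨d, hd⟩ := Finset.card_eq_one.mp
      (cube_mem_edgeSet.mp (edgeSet_mono hle ((SimpleGraph.mem_edgeSet _).mpr hUV)))
    rw [sd_mk] at hd
    constructor
    · intro hn
      have hdR : d ∉ R := fun hdR => hn ⟨d, hdR, hd⟩
      have h0 : symmDiff (U ∩ R) (V ∩ R) = ∅ := by
        rw [← inter_sd, hd, Finset.singleton_inter_of_notMem hdR]
      exact symmDiff_eq_bot.mp (by rw [Finset.bot_eq_empty]; exact h0)
    · rintro heq ⟨i, hiR, hi⟩
      rw [hd] at hi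
      obtain rfl : d = i := Finset.singleton_injective hi
      have h1 : symmDiff (U ∩ R) (V ∩ R) = {d} := by
        rw [← inter_sd, hd, Finset.singleton_inter_of_mem hiR]
      rw [heq, symmDiff_self] at h1
      exact Finset.singleton_ne_empty d (by rw [← h1]; rfl)
  set cls : Sym2 (Finset (Fin n)) → Finset (Fin n) :=
    Sym2.lift ⟨fun U V => U ∩ V ∩ R, fun U V => by dsimp only; rw [Finset.inter_comm U V]⟩ with hclsdef
  have hcls_mk : ∀ U V : Finset (Fin n), cls s(U,V) = U ∩ V ∩ R := fun _ _ => rfl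
  have hfiber : ∀ X' : Finset (Fin n), {e ∈ within | cls e = X'} =
      edgesWithin {W : Finset (Fin n) | W ∩ R = X'} T := by
    intro X'
    ext e
    induction e using Sym2.ind with | _ U V =>
    constructor
    · rintro ⟨⟨he, hnc⟩, hcls⟩
      have hUV : T.Adj U V := (SimpleGraph.mem_edgeSet _).mp he
      have hnotin : ¬ ∃ i ∈ R, symmDiff U V = {i} := by
        rintro ⟨i, hiR, hi⟩
        exact hnc ⟨he, i, hiR, by rw [sd_mk]; exact hi⟩
      have heq := (hkey U V hUV).mp hnotin
      have hUX : U ∩ R = X' := by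
        rw [← hcls, hcls_mk, hiiR, ← heq, Finset.inter_self]
      refine ⟨he, ?_⟩
      intro v hv
      rcases Sym2.mem_iff.mp hv with h | h
      · rw [h]; exact hUX
      · rw [h]; show _ ∩ R = X'; rw [← heq]; exact hUX
    · rintro ⟨he, hv⟩
      have hUV : T.Adj U V := (SimpleGraph.mem_edgeSet _).mp he
      have hU : U ∩ R = X' := hv U (Sym2.mem_mk_left U V)
      have hV : V ∩ R = X' := hv V (Sym2.mem_mk_right U V)
      have heq : U ∩ R = V ∩ R := by rw [hU, hV]
      refine ⟨⟨he, ?_⟩, ?_⟩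
      · rintro ⟨-, i, hiR, hi⟩
        rw [sd_mk] at hi
        exact (hkey U V hUV).mpr heq ⟨i, hiR, hi⟩
      · rw [hcls_mk, hiiR, ← heq, Finset.inter_self, hU]
  have hmemcls : ∀ e ∈ within, cls e ∈ R.powerset := by
    intro e he
    induction e using Sym2.ind with | _ U V =>
    rw [hcls_mk, Finset.mem_powerset]
    exact Finset.inter_subset_right
  have hsum : ∑ X' ∈ R.powerset, (edgesWithin {W : Finset (Fin n) | W ∩ R = X'} T).ncard
      = 2 ^ n - 2 ^ r := by
    rw [← hwcard, aux_ncard_fiber within cls R.powerset hmemcls]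
    exact Finset.sum_congr rfl fun X' _ => by rw [hfiber X']
  set M := 2 ^ (n - r) with hM
  have hbound : ∀ X' ∈ R.powerset, (edgesWithin {W : Finset (Fin n) | W ∩ R = X'} T).ncard
      ≤ M - 1 := by
    intro X' hX'
    have hXR' := Finset.mem_powerset.mp hX'
    have hnecl : Nonempty ↥{W : Finset (Fin n) | W ∩ R = X'} :=
      ⟨⟨X', Finset.inter_eq_left.mpr hXR'⟩⟩
    have hcard : Fintype.card ↥{W : Finset (Fin n) | W ∩ R = X'} = M := by
      rw [← Nat.card_eq_fintype_card, card_class R X' hXR']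
    have hacy := induce_acyclic htree.IsAcyclic {W : Finset (Fin n) | W ∩ R = X'}
    have hb := aux_acyclic_ncard_le (T.induce {W : Finset (Fin n) | W ∩ R = X'}) hacy
    rw [hcard] at hb
    rw [ncard_edgesWithin]
    omega
  have hsumconst : ∑ _X' ∈ R.powerset, (M - 1) = 2 ^ r * (M - 1) := by
    rw [Finset.sum_const, Finset.card_powerset, smul_eq_mul, hrdef]
  have hprod : 2 ^ r * (M - 1) = 2 ^ n - 2 ^ r := by
    have hh : 2 ^ r * (M - 1) + 2 ^ r * 1 = 2 ^ r * M := by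
      rw [← Nat.mul_add]
      congr 1
      omega
    omega
  have heach := (Finset.sum_eq_sum_iff_of_le hbound).mp (by rw [hsum, hsumconst, hprod])
  have hXcard := heach X (Finset.mem_powerset.mpr hX)
  refine ⟨?_, hXcard⟩
  have hnecl : Nonempty ↥{W : Finset (Fin n) | W ∩ R = X} :=
    ⟨⟨X, Finset.inter_eq_left.mpr hX⟩⟩
  have hcard : Fintype.card ↥{W : Finset (Fin n) | W ∩ R = X} = M := by
    rw [← Nat.card_eq_fintype_card, card_class R X hX]
  refine aux_isTree_of_acyclic_ncard (induce_acyclic htree.IsAcyclic _) ?_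
  rw [← ncard_edgesWithin, hXcard, hcard]
  omega

-- ===== slide helpers =====
section SlideHelpers

variable {n : ℕ}

lemma not_diag_of_sd {f : Sym2 (Finset (Fin n))} {d : Fin n} (h : sd f = {d}) : ¬ f.IsDiag := by
  induction f using Sym2.ind with | _ U V =>
  rw [Sym2.mk_isDiag_iff]
  intro hUV
  exact ne_of_sd (by rw [← sd_mk]; exact h) hUV

lemma slid_edgeSet {T : SimpleGraph (Finset (Fin n))} (hle : T ≤ cube n)
    {e f : Sym2 (Finset (Fin n))} (hf : ¬ f.IsDiag) :
    (SimpleGraph.fromEdgeSet ((T.edgeSet \ {e}) ∪ {f})).edgeSet = (T.edgeSet \ {e}) ∪ {f} := by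
  ext g
  rw [edgeSet_fromEdgeSet]
  simp only [Set.mem_diff, Set.mem_union, Set.mem_singleton_iff, Set.mem_setOf_eq]
  refine ⟨fun h => h.1, fun h => ⟨h, ?_⟩⟩
  rcases h with ⟨hT, -⟩ | hg
  · exact fun hd => (cube n).not_isDiag_of_mem_edgeSet (edgeSet_mono hle hT) hd
  · subst hg; exact fun hd => hf hd

lemma slid_not_tree_of_mem {T : SimpleGraph (Finset (Fin n))}
    (hT : IsSpanningTreeOf T (cube n)) (hn : 0 < n)
    {e f : Sym2 (Finset (Fin n))} (he : e ∈ T.edgeSet) (hf : f ∈ T.edgeSet) (hne : f ≠ e) :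
    ¬ (SimpleGraph.fromEdgeSet ((T.edgeSet \ {e}) ∪ {f})).IsTree := by
  intro htree'
  have hfd : ¬ f.IsDiag := (cube n).not_isDiag_of_mem_edgeSet (edgeSet_mono hT.1 hf)
  have hES : (SimpleGraph.fromEdgeSet ((T.edgeSet \ {e}) ∪ {f})).edgeSet = T.edgeSet \ {e} := by
    rw [slid_edgeSet hT.1 hfd, Set.union_singleton,
      Set.insert_eq_self.mpr (Set.mem_diff_singleton.mpr ⟨hf, hne⟩)]
  have h1 := aux_tree_ncard htree'
  have h2 := aux_tree_ncard hT.2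
  rw [hES, Set.ncard_diff_singleton_of_mem he] at h1
  rw [Fintype.card_finset, Fintype.card_fin] at h1 h2
  have h3 : 2 ≤ 2 ^ n := by
    calc 2 = 2 ^ 1 := (pow_one 2).symm
    _ ≤ 2 ^ n := Nat.pow_le_pow_right (by norm_num) hn
  omega

lemma dirCount_slide {T : SimpleGraph (Finset (Fin n))} (hle : T ≤ cube n)
    {e f : Sym2 (Finset (Fin n))} {j0 : Fin n} (hsde : sd e = {j0}) (hsdf : sd f = {j0})
    (hfd : ¬ f.IsDiag) {k : Fin n} (hk : k ≠ j0) :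
    dirCount (SimpleGraph.fromEdgeSet ((T.edgeSet \ {e}) ∪ {f})) k = dirCount T k := by
  rw [dirCount_eq, dirCount_eq, slid_edgeSet hle hfd]
  congr 1
  ext g
  simp only [Set.mem_setOf_eq, Set.mem_union, Set.mem_diff, Set.mem_singleton_iff]
  constructor
  · rintro ⟨⟨hg, -⟩ | rfl, hsd⟩
    · exact ⟨hg, hsd⟩
    · rw [hsdf] at hsd
      exact absurd (Finset.singleton_injective hsd).symm hk
  · rintro ⟨hg, hsd⟩
    refine ⟨Or.inl ⟨hg, ?_⟩, hsd⟩
    rintro rfl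
    rw [hsde] at hsd
    exact hk (Finset.singleton_injective hsd).symm

lemma slideEdge_mk (i : Fin n) (U V : Finset (Fin n)) :
    slideEdge i s(U, V) = s(symmDiff U {i}, symmDiff V {i}) := by
  rw [slideEdge, Sym2.map_pair_eq]

lemma slideEdge_ne {Y : Finset (Fin n)} {i j : Fin n} (hij : i ≠ j) :
    slideEdge i s(Y, symmDiff Y {j}) ≠ s(Y, symmDiff Y {j}) := by
  rw [slideEdge_mk]
  intro h
  rw [Sym2.eq_iff] at h
  rcases h with ⟨h1, -⟩ | ⟨h1, -⟩
  · exact sdx_ne Y i h1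
  · exact hij (sdx_inj h1)

lemma inter_sdx_not_mem {R Y : Finset (Fin n)} {j : Fin n} (hj : j ∉ R) :
    (symmDiff Y {j}) ∩ R = Y ∩ R := by
  rw [inter_sd, Finset.singleton_inter_of_notMem hj, ← Finset.bot_eq_empty, symmDiff_bot]

lemma inter_sdx_mem {R Y : Finset (Fin n)} {i : Fin n} (hi : i ∈ R) :
    (symmDiff Y {i}) ∩ R = symmDiff (Y ∩ R) {i} := by
  rw [inter_sd, Finset.singleton_inter_of_mem hi]

end SlideHelpers

/-- Theorem: slides of edges in directions outside `R`. Let `T` be a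
spanning tree of `Q_n` reducing over the proper nonempty subset `R`, and let
`e = {Y, Y ⊕ {j}}` be an edge of `T` with `j ∉ R`; put `X = Y ∩ R`. Then (a) `e` is not
`i`-slidable for any `i ∈ R`, and (b) for `i ∉ R`, `i ≠ j`, `e` is `i`-slidable in `T`
iff it is `i`-slidable as an edge of the spanning tree `T(R,X)` of `Q_n(R,X)`. -/
theorem stmt12 (n : ℕ) (R : Finset (Fin n)) (hR1 : R.Nonempty) (hR2 : R ≠ Finset.univ)
    (T : SimpleGraph (Finset (Fin n))) (hT : IsSpanningTreeOf T (cube n))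
    (hred : ReducesOver (fun i => dirCount T i) R)
    (j : Fin n) (hj : j ∉ R) (Y : Finset (Fin n))
    (he : s(Y, symmDiff Y {j}) ∈ T.edgeSet) :
    (∀ i ∈ R, ¬ Slidable n T i s(Y, symmDiff Y {j})) ∧
    (∀ i, i ∉ R → i ≠ j →
      (Slidable n T i s(Y, symmDiff Y {j}) ↔
        SlidableOn n {W : Finset (Fin n) | W ∩ R = Y ∩ R}
          (edgesWithin {W : Finset (Fin n) | W ∩ R = Y ∩ R} T) i
          s(Y, symmDiff Y {j}))) := by
  classical
  have hnpos : 0 < n := by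
    obtain ⟨i0, -⟩ := hR1
    exact i0.pos
  have hredT : ∑ i ∈ R, dirCount T i = 2 ^ R.card - 1 := hred
  have hsde : sd s(Y, symmDiff Y {j}) = {j} := by
    rw [sd_mk, symmDiff_symmDiff_cancel_left]
  have hY's : (symmDiff Y {j}) ∩ R = Y ∩ R := inter_sdx_not_mem hj
  constructor
  · -- part (a)
    intro i hiR hslid
    obtain ⟨hmem, hST'⟩ := hslid
    have hij : i ≠ j := fun h => hj (h ▸ hiR)
    have hfne : slideEdge i s(Y, symmDiff Y {j}) ≠ s(Y, symmDiff Y {j}) := slideEdge_ne hij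
    by_cases hfT : slideEdge i s(Y, symmDiff Y {j}) ∈ T.edgeSet
    · exact slid_not_tree_of_mem hT hnpos he hfT hfne hST'.2
    · -- slid tree reduces over R as well
      have hsdf : sd (slideEdge i s(Y, symmDiff Y {j})) = {j} := by
        rw [sd_slideEdge, hsde]
      have hfdiag : ¬ (slideEdge i s(Y, symmDiff Y {j})).IsDiag := not_diag_of_sd hsdf
      have hred' : ∑ k ∈ R,
          dirCount (SimpleGraph.fromEdgeSet
            ((T.edgeSet \ {s(Y, symmDiff Y {j})}) ∪ {slideEdge i s(Y, symmDiff Y {j})})) k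
          = 2 ^ R.card - 1 := by
        rw [← hredT]
        refine Finset.sum_congr rfl fun k hk => ?_
        exact dirCount_slide hT.1 hsde hsdf hfdiag (fun h => hj (h ▸ hk))
      have hX'R : symmDiff (Y ∩ R) {i} ⊆ R := by
        intro a ha
        rw [Finset.mem_symmDiff] at ha
        rcases ha with ⟨h1, -⟩ | ⟨h1, -⟩
        · exact (Finset.mem_inter.mp h1).2
        · rw [Finset.mem_singleton] at h1
          exact h1 ▸ hiR
      have hdecT := decomp hT R hredT (symmDiff (Y ∩ R) {i}) hX'R
      have hdecT' := decomp hST' R hred' (symmDiff (Y ∩ R) {i}) hX'R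
      -- the within-edge sets
      have hsetEq : edgesWithin {W : Finset (Fin n) | W ∩ R = symmDiff (Y ∩ R) {i}}
            (SimpleGraph.fromEdgeSet
              ((T.edgeSet \ {s(Y, symmDiff Y {j})}) ∪ {slideEdge i s(Y, symmDiff Y {j})}))
          = insert (slideEdge i s(Y, symmDiff Y {j}))
              (edgesWithin {W : Finset (Fin n) | W ∩ R = symmDiff (Y ∩ R) {i}} T) := by
        ext g
        constructor
        · rintro ⟨hg, hv⟩
          rw [slid_edgeSet hT.1 hfdiag] at hg
          rcases hg with ⟨hgT, hgne⟩ | hgf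
          · exact Set.mem_insert_of_mem _ ⟨hgT, hv⟩
          · rw [Set.mem_singleton_iff] at hgf
            exact hgf ▸ Set.mem_insert _ _
        · intro hg
          rcases Set.mem_insert_iff.mp hg with rfl | ⟨hgT, hv⟩
          · refine ⟨?_, ?_⟩
            · rw [slid_edgeSet hT.1 hfdiag]
              exact Or.inr rfl
            · rw [slideEdge_mk]
              intro v hv
              rcases Sym2.mem_iff.mp hv with h | h
              · rw [h]
                show (symmDiff Y {i}) ∩ R = symmDiff (Y ∩ R) {i}
                exact inter_sdx_mem hiR
              · rw [h]
                show (symmDiff (symmDiff Y {j}) {i}) ∩ R = symmDiff (Y ∩ R) {i}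
                rw [inter_sdx_mem hiR, hY's]
          · refine ⟨?_, hv⟩
            rw [slid_edgeSet hT.1 hfdiag]
            refine Or.inl ⟨hgT, ?_⟩
            intro hge
            -- then Y ∈ class of X∆{i}, contradiction
            have hYmem : Y ∈ g := by rw [hge]; exact Sym2.mem_mk_left _ _
            have := hv Y hYmem
            have hYX : Y ∩ R = symmDiff (Y ∩ R) {i} := this
            exact sdx_ne (Y ∩ R) i hYX.symm
      have hfnotin : slideEdge i s(Y, symmDiff Y {j}) ∉
          edgesWithin {W : Finset (Fin n) | W ∩ R = symmDiff (Y ∩ R) {i}} T :=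
        fun h => hfT h.1
      have hfin : (edgesWithin {W : Finset (Fin n) | W ∩ R = symmDiff (Y ∩ R) {i}} T).Finite :=
        Set.toFinite _
      have hcount := hdecT'.2
      rw [hsetEq, Set.ncard_insert_of_notMem hfnotin hfin, hdecT.2] at hcount
      have h2nr : 1 ≤ 2 ^ (n - R.card) := Nat.one_le_two_pow
      omega
  · -- part (b)
    intro i hiR hij
    have hfne : slideEdge i s(Y, symmDiff Y {j}) ≠ s(Y, symmDiff Y {j}) := slideEdge_ne hij
    have hsdf : sd (slideEdge i s(Y, symmDiff Y {j})) = {j} := by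
      rw [sd_slideEdge, hsde]
    have hfdiag : ¬ (slideEdge i s(Y, symmDiff Y {j})).IsDiag := not_diag_of_sd hsdf
    have hfcube : slideEdge i s(Y, symmDiff Y {j}) ∈ (cube n).edgeSet :=
      cube_mem_edgeSet.mpr (by rw [hsdf]; exact Finset.card_singleton j)
    have hXR : Y ∩ R ⊆ R := Finset.inter_subset_right
    have hYs : Y ∈ {W : Finset (Fin n) | W ∩ R = Y ∩ R} := rfl
    have hY's' : symmDiff Y {j} ∈ {W : Finset (Fin n) | W ∩ R = Y ∩ R} := hY's
    have hf1 : (symmDiff Y {i}) ∩ R = Y ∩ R := inter_sdx_not_mem hiR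
    have hf2 : (symmDiff (symmDiff Y {j}) {i}) ∩ R = Y ∩ R := by
      rw [inter_sdx_not_mem hiR, hY's]
    have hfendpoints : ∀ v ∈ slideEdge i s(Y, symmDiff Y {j}),
        v ∈ {W : Finset (Fin n) | W ∩ R = Y ∩ R} := by
      rw [slideEdge_mk]
      intro v hv
      rcases Sym2.mem_iff.mp hv with h | h
      · rw [h]; exact hf1
      · rw [h]; exact hf2
    have heE : s(Y, symmDiff Y {j}) ∈ edgesWithin {W : Finset (Fin n) | W ∩ R = Y ∩ R} T := by
      refine ⟨he, ?_⟩
      intro v hv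
      rcases Sym2.mem_iff.mp hv with h | h
      · rw [h]; exact hYs
      · rw [h]; exact hY's'
    have hdecT := decomp hT R hredT (Y ∩ R) hXR
    have htotal : T.edgeSet.ncard = 2 ^ n - 1 := by
      have h1 := aux_tree_ncard hT.2
      rw [Fintype.card_finset, Fintype.card_fin] at h1
      omega
    have h2n1 : 1 ≤ 2 ^ n := Nat.one_le_two_pow
    have h2n2 : 2 ≤ 2 ^ n := by
      calc 2 = 2 ^ 1 := (pow_one 2).symm
      _ ≤ 2 ^ n := Nat.pow_le_pow_right (by norm_num) hnpos
    constructor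
    · rintro ⟨hmem, hST'⟩
      by_cases hfT : slideEdge i s(Y, symmDiff Y {j}) ∈ T.edgeSet
      · exact absurd hST'.2 (slid_not_tree_of_mem hT hnpos he hfT hfne)
      have hred' : ∑ k ∈ R,
          dirCount (SimpleGraph.fromEdgeSet
            ((T.edgeSet \ {s(Y, symmDiff Y {j})}) ∪ {slideEdge i s(Y, symmDiff Y {j})})) k
          = 2 ^ R.card - 1 := by
        rw [← hredT]
        exact Finset.sum_congr rfl fun k hk =>
          dirCount_slide hT.1 hsde hsdf hfdiag (fun h => hj (h ▸ hk))
      have hdecT' := decomp hST' R hred' (Y ∩ R) hXR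
      refine ⟨heE, ?_, ?_, ?_⟩
      · rintro g (⟨⟨hgT, -⟩, -⟩ | hgf)
        · exact edgeSet_mono hT.1 hgT
        · rw [Set.mem_singleton_iff] at hgf
          exact hgf ▸ hfcube
      · rintro g (⟨⟨-, hgv⟩, -⟩ | hgf) v hv
        · exact hgv v hv
        · rw [Set.mem_singleton_iff] at hgf
          exact hfendpoints v (hgf ▸ hv)
      · have hgeq : (SimpleGraph.fromEdgeSet
              (((edgesWithin {W : Finset (Fin n) | W ∩ R = Y ∩ R} T) \ {s(Y, symmDiff Y {j})})
                ∪ {slideEdge i s(Y, symmDiff Y {j})})).induce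
                  {W : Finset (Fin n) | W ∩ R = Y ∩ R}
            = (SimpleGraph.fromEdgeSet ((T.edgeSet \ {s(Y, symmDiff Y {j})})
                ∪ {slideEdge i s(Y, symmDiff Y {j})})).induce
                  {W : Finset (Fin n) | W ∩ R = Y ∩ R} := by
          ext a b
          show (SimpleGraph.fromEdgeSet _).Adj a.1 b.1 ↔ (SimpleGraph.fromEdgeSet _).Adj a.1 b.1
          rw [fromEdgeSet_adj, fromEdgeSet_adj]
          constructor
          · rintro ⟨(⟨⟨hgT, -⟩, hne2⟩ | hgf), hab⟩
            · exact ⟨Or.inl ⟨hgT, hne2⟩, hab⟩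
            · exact ⟨Or.inr hgf, hab⟩
          · rintro ⟨(⟨hgT, hne2⟩ | hgf), hab⟩
            · refine ⟨Or.inl ⟨⟨hgT, ?_⟩, hne2⟩, hab⟩
              intro v hv
              rcases Sym2.mem_iff.mp hv with h | h
              · rw [h]; exact a.2
              · rw [h]; exact b.2
            · exact ⟨Or.inr hgf, hab⟩
        rw [hgeq]
        exact hdecT'.1
    · rintro ⟨heE', hsub, hend, hKtree⟩
      have hfT : slideEdge i s(Y, symmDiff Y {j}) ∉ T.edgeSet := by
        intro hfT
        have hfE : slideEdge i s(Y, symmDiff Y {j}) ∈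
            edgesWithin {W : Finset (Fin n) | W ∩ R = Y ∩ R} T := ⟨hfT, hfendpoints⟩
        have hKle : (SimpleGraph.fromEdgeSet
              (((edgesWithin {W : Finset (Fin n) | W ∩ R = Y ∩ R} T) \ {s(Y, symmDiff Y {j})})
                ∪ {slideEdge i s(Y, symmDiff Y {j})})).induce
                  {W : Finset (Fin n) | W ∩ R = Y ∩ R}
            ≤ T.induce {W : Finset (Fin n) | W ∩ R = Y ∩ R} := by
          intro a b hab
          have hab' : (SimpleGraph.fromEdgeSet
              (((edgesWithin {W : Finset (Fin n) | W ∩ R = Y ∩ R} T) \ {s(Y, symmDiff Y {j})})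
                ∪ {slideEdge i s(Y, symmDiff Y {j})})).Adj a.1 b.1 := hab
          rw [fromEdgeSet_adj] at hab'
          have hadjT : T.Adj a.1 b.1 := by
            rcases hab'.1 with ⟨⟨hgT, -⟩, -⟩ | hgf
            · exact (SimpleGraph.mem_edgeSet _).mp hgT
            · rw [Set.mem_singleton_iff] at hgf
              exact (SimpleGraph.mem_edgeSet _).mp (hgf ▸ hfT)
          exact hadjT
        have h1 := aux_tree_ncard hKtree
        have h2 := aux_tree_ncard hdecT.1
        rw [← Nat.card_eq_fintype_card] at h1 h2
        have hle2 : (T.induce {W : Finset (Fin n) | W ∩ R = Y ∩ R}).edgeSet.ncard ≤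
            ((SimpleGraph.fromEdgeSet
              (((edgesWithin {W : Finset (Fin n) | W ∩ R = Y ∩ R} T) \ {s(Y, symmDiff Y {j})})
                ∪ {slideEdge i s(Y, symmDiff Y {j})})).induce
                  {W : Finset (Fin n) | W ∩ R = Y ∩ R}).edgeSet.ncard := by omega
        have heq := Set.eq_of_subset_of_ncard_le (edgeSet_mono hKle) hle2 (Set.toFinite _)
        have hgraph := edgeSet_inj.mp heq
        have hadjT : (T.induce {W : Finset (Fin n) | W ∩ R = Y ∩ R}).Adj
            ⟨Y, hYs⟩ ⟨symmDiff Y {j}, hY's'⟩ := (SimpleGraph.mem_edgeSet _).mp he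
        rw [← hgraph] at hadjT
        have hadjK : (SimpleGraph.fromEdgeSet
              (((edgesWithin {W : Finset (Fin n) | W ∩ R = Y ∩ R} T) \ {s(Y, symmDiff Y {j})})
                ∪ {slideEdge i s(Y, symmDiff Y {j})})).Adj Y (symmDiff Y {j}) := hadjT
        rw [fromEdgeSet_adj] at hadjK
        rcases hadjK.1 with ⟨-, hne2⟩ | hgf
        · exact hne2 rfl
        · rw [Set.mem_singleton_iff] at hgf
          exact hfne hgf.symm
      have hncard : ((T.edgeSet \ {s(Y, symmDiff Y {j})})
          ∪ {slideEdge i s(Y, symmDiff Y {j})}).ncard = 2 ^ n - 1 := by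
        rw [Set.union_singleton, Set.ncard_insert_of_notMem (fun h => hfT h.1) (Set.toFinite _),
          Set.ncard_diff_singleton_of_mem he]
        omega
      have hφ : ∀ u v : Finset (Fin n), T.Adj u v →
          (SimpleGraph.fromEdgeSet ((T.edgeSet \ {s(Y, symmDiff Y {j})})
            ∪ {slideEdge i s(Y, symmDiff Y {j})})).Reachable u v := by
        intro u v huv
        by_cases hguv : s(u, v) = s(Y, symmDiff Y {j})
        · have hus : u ∈ {W : Finset (Fin n) | W ∩ R = Y ∩ R} ∧
              v ∈ {W : Finset (Fin n) | W ∩ R = Y ∩ R} := by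
            rw [Sym2.eq_iff] at hguv
            rcases hguv with ⟨rfl, rfl⟩ | ⟨rfl, rfl⟩
            · exact ⟨hYs, hY's'⟩
            · exact ⟨hY's', hYs⟩
          have hmapAdj : ∀ a b : ↥{W : Finset (Fin n) | W ∩ R = Y ∩ R},
              ((SimpleGraph.fromEdgeSet
                (((edgesWithin {W : Finset (Fin n) | W ∩ R = Y ∩ R} T) \ {s(Y, symmDiff Y {j})})
                  ∪ {slideEdge i s(Y, symmDiff Y {j})})).induce
                    {W : Finset (Fin n) | W ∩ R = Y ∩ R}).Adj a b →
              (SimpleGraph.fromEdgeSet ((T.edgeSet \ {s(Y, symmDiff Y {j})})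
                ∪ {slideEdge i s(Y, symmDiff Y {j})})).Adj a.1 b.1 := by
            intro a b hab
            have hab' : (SimpleGraph.fromEdgeSet
                (((edgesWithin {W : Finset (Fin n) | W ∩ R = Y ∩ R} T) \ {s(Y, symmDiff Y {j})})
                  ∪ {slideEdge i s(Y, symmDiff Y {j})})).Adj a.1 b.1 := hab
            rw [fromEdgeSet_adj] at hab' ⊢
            refine ⟨?_, hab'.2⟩
            rcases hab'.1 with ⟨⟨hgT, -⟩, hne2⟩ | hgf
            · exact Or.inl ⟨hgT, hne2⟩
            · exact Or.inr hgf
          have hreach := hKtree.isConnected.preconnected ⟨u, hus.1⟩ ⟨v, hus.2⟩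
          exact hreach.map ⟨Subtype.val, fun {a b} hab => hmapAdj a b hab⟩
        · refine SimpleGraph.Adj.reachable ?_
          rw [fromEdgeSet_adj]
          exact ⟨Or.inl ⟨(SimpleGraph.mem_edgeSet _).mpr huv, hguv⟩, huv.ne⟩
      have hconn' : (SimpleGraph.fromEdgeSet ((T.edgeSet \ {s(Y, symmDiff Y {j})})
          ∪ {slideEdge i s(Y, symmDiff Y {j})})).Connected := by
        rw [connected_iff]
        exact ⟨fun u v => aux_reachable_of_adj_imp hφ (hT.2.isConnected.preconnected u v), ⟨∅⟩⟩
      have htree' : (SimpleGraph.fromEdgeSet ((T.edgeSet \ {s(Y, symmDiff Y {j})})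
          ∪ {slideEdge i s(Y, symmDiff Y {j})})).IsTree := by
        apply aux_isTree_of_connected_ncard hconn'
        rw [slid_edgeSet hT.1 hfdiag, hncard, Fintype.card_finset, Fintype.card_fin]
        omega
      refine ⟨he, ?_, htree'⟩
      rw [← edgeSet_subset_edgeSet, slid_edgeSet hT.1 hfdiag]
      rintro g (⟨hgT, -⟩ | hgf)
      · exact edgeSet_mono hT.1 hgT
      · rw [Set.mem_singleton_iff] at hgf
        exact hgf ▸ hfcube
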